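/- For n ≥ 3, the family F = {{i} : i ∈ [n]} ∪ {{1,...,i} : i ∈ [n]} ∪ {∅} is induced-N-saturated in B_n; hence isat(n, N) ≤ 2n. -/

import Mathlib

/-- `X` and `Y` are incomparable under inclusion. -/
def Incomp {n : ℕ} (X Y : Finset (Fin n)) : Prop :=
  ¬ X ⊆ Y ∧ ¬ Y ⊆ X

/-- `F` contains an induced copy of the poset `N` (elements `A, B, C, D` with
`A < B`, `C < B`, `C < D` and all other pairs incomparable). -/
def NCopy {n : ℕ} (F : Finset (Finset (Fin n))) : Prop :=
  ∃ A ∈ F, ∃ B ∈ F, ∃ C ∈ F, ∃ D ∈ F,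
    A ⊂ B ∧ C ⊂ B ∧ C ⊂ D ∧ Incomp A C ∧ Incomp A D ∧ Incomp B D

/-- `F` is induced-`N`-saturated in `B_n`. -/
def NSaturated {n : ℕ} (F : Finset (Finset (Fin n))) : Prop :=
  ¬ NCopy F ∧ ∀ S ∉ F, NCopy (insert S F)

abbrev Fam (n : ℕ) : Finset (Finset (Fin n)) :=
  (Finset.univ.image fun i : Fin n => ({i} : Finset (Fin n))) ∪
    (Finset.univ.image fun i : Fin n => Finset.Iic i) ∪ {∅}

lemma mem_Fam {n : ℕ} (X : Finset (Fin n)) :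
    X ∈ Fam n ↔ (∃ i, X = {i}) ∨ (∃ i, X = Finset.Iic i) ∨ X = ∅ := by
  simp [Fam, Finset.mem_union, Finset.mem_image, eq_comm, or_assoc]
  tauto

lemma singleton_mem_Fam {n : ℕ} (i : Fin n) : ({i} : Finset (Fin n)) ∈ Fam n :=
  (mem_Fam _).2 (Or.inl ⟨i, rfl⟩)

lemma Iic_mem_Fam {n : ℕ} (i : Fin n) : (Finset.Iic i) ∈ Fam n :=
  (mem_Fam _).2 (Or.inr (Or.inl ⟨i, rfl⟩))

lemma saturate {n : ℕ} (hn : 3 ≤ n) (S : Finset (Fin n)) (hS : S ∉ Fam n) :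
    NCopy (insert S (Fam n)) := by
  have hchar := (mem_Fam S).not.1 hS
  push_neg at hchar
  obtain ⟨hsing, hIic, hne'⟩ := hchar
  have hne : S.Nonempty := hne'
  set M := S.max' hne with hM
  have hMS : M ∈ S := S.max'_mem hne
  have hleM : ∀ x ∈ S, x ≤ M := fun x hx => S.le_max' x hx
  -- S has a gap: some j ∈ S and k < j with k ∉ S
  obtain ⟨j, hjS, k, hkj, hkS⟩ : ∃ j ∈ S, ∃ k, k < j ∧ k ∉ S := by
    by_contra h
    push_neg at h
    apply hIic M
    ext x
    simp only [Finset.mem_Iic]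
    constructor
    · exact fun hx => hleM x hx
    · intro hx
      rcases eq_or_lt_of_le hx with rfl | hlt
      · exact hMS
      · exact h M hMS x hlt
  have hz : (0 : ℕ) < n := by omega
  set z : Fin n := ⟨0, hz⟩ with hzdef
  by_cases h0 : z ∈ S
  · -- 0 ∈ S : use A = {M}, B = S, C = {i-1}, D = Iic i, i = min of complement
    have hkc : k ∈ Sᶜ := Finset.mem_compl.2 hkS
    have hTne : (Sᶜ : Finset (Fin n)).Nonempty := ⟨k, hkc⟩
    set i := (Sᶜ : Finset (Fin n)).min' hTne with hi
    have hiS : i ∉ S := Finset.mem_compl.1 (Finset.min'_mem _ hTne)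
    have hmin : ∀ x, x ∉ S → i ≤ x := fun x hx =>
      Finset.min'_le _ x (Finset.mem_compl.2 hx)
    have hipos : 0 < (i : ℕ) := by
      rcases Nat.eq_zero_or_pos (i : ℕ) with h | h
      · exact absurd (show z ∉ S from by
          have : z = i := by apply Fin.ext; simp [hzdef, h]
          rw [this]; exact hiS) (fun hh => hh h0)
      · exact h
    set c : Fin n := ⟨(i : ℕ) - 1, by omega⟩ with hc
    have hci : c < i := by simp [Fin.lt_def, hc]; omega
    have hcS : c ∈ S := by
      by_contra hcS
      exact absurd (hmin c hcS) (not_le.2 hci)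
    have hiM : i < M := lt_of_le_of_lt (hmin k hkS) (lt_of_lt_of_le hkj (hleM j hjS))
    have hcM : c < M := lt_trans hci hiM
    refine ⟨{M}, ?_, S, Finset.mem_insert_self _ _, {c}, ?_, Finset.Iic i, ?_,
      ?_, ?_, ?_, ?_, ?_, ?_⟩
    · exact Finset.mem_insert_of_mem (singleton_mem_Fam M)
    · exact Finset.mem_insert_of_mem (singleton_mem_Fam c)
    · exact Finset.mem_insert_of_mem (Iic_mem_Fam i)
    · refine Finset.ssubset_iff_of_subset (Finset.singleton_subset_iff.2 hMS) |>.2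
        ⟨c, hcS, ?_⟩
      simp only [Finset.mem_singleton]
      exact fun h => absurd h (ne_of_lt hcM)
    · refine Finset.ssubset_iff_of_subset (Finset.singleton_subset_iff.2 hcS) |>.2
        ⟨M, hMS, ?_⟩
      simp only [Finset.mem_singleton]
      exact fun h => absurd h.symm (ne_of_lt hcM)
    · refine Finset.ssubset_iff_of_subset
        (Finset.singleton_subset_iff.2 (Finset.mem_Iic.2 (le_of_lt hci))) |>.2
        ⟨i, Finset.mem_Iic.2 le_rfl, ?_⟩
      simp only [Finset.mem_singleton]
      exact fun h => absurd h.symm (ne_of_lt hci)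
    · constructor
      · intro h
        have := Finset.singleton_subset_iff.1 h
        simp only [Finset.mem_singleton] at this
        exact absurd this.symm (ne_of_lt hcM)
      · intro h
        have := Finset.singleton_subset_iff.1 h
        simp only [Finset.mem_singleton] at this
        exact absurd this (ne_of_lt hcM)
    · constructor
      · intro h
        have := Finset.singleton_subset_iff.1 h
        exact absurd (Finset.mem_Iic.1 this) (not_le.2 hiM)
      · intro h
        have := h (Finset.mem_Iic.2 (le_of_lt hci))
        simp only [Finset.mem_singleton] at this
        exact absurd this (ne_of_lt hcM)
    · constructor
      · intro h
        exact absurd (Finset.mem_Iic.1 (h hMS)) (not_le.2 hiM)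
      · intro h
        exact hiS (h (Finset.mem_Iic.2 le_rfl))
  · -- 0 ∉ S : use A = {0}, B = Iic c, C = {c}, D = S, c = min S
    set c := S.min' hne with hc
    have hcS : c ∈ S := S.min'_mem hne
    have hc0 : z ≠ c := fun h => h0 (h ▸ hcS)
    have hzc : z < c := lt_of_le_of_ne (by simp [Fin.le_def, hzdef]) hc0
    have hcM : c < M := by
      rcases lt_or_ge c M with h | h
      · exact h
      · exfalso
        apply hsing c
        apply Finset.eq_singleton_iff_unique_mem.2 ⟨hcS, fun x hx => ?_⟩
        exact le_antisymm (le_trans (hleM x hx) h) (S.min'_le x hx)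
    refine ⟨{z}, ?_, Finset.Iic c, ?_, {c}, ?_, S, Finset.mem_insert_self _ _,
      ?_, ?_, ?_, ?_, ?_, ?_⟩
    · exact Finset.mem_insert_of_mem (singleton_mem_Fam z)
    · exact Finset.mem_insert_of_mem (Iic_mem_Fam c)
    · exact Finset.mem_insert_of_mem (singleton_mem_Fam c)
    · refine Finset.ssubset_iff_of_subset
        (Finset.singleton_subset_iff.2 (Finset.mem_Iic.2 (le_of_lt hzc))) |>.2
        ⟨c, Finset.mem_Iic.2 le_rfl, ?_⟩
      simp only [Finset.mem_singleton]
      exact fun h => hc0 h.symm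
    · refine Finset.ssubset_iff_of_subset
        (Finset.singleton_subset_iff.2 (Finset.mem_Iic.2 le_rfl)) |>.2
        ⟨z, Finset.mem_Iic.2 (le_of_lt hzc), ?_⟩
      simp only [Finset.mem_singleton]
      exact fun h => hc0 h
    · refine Finset.ssubset_iff_of_subset (Finset.singleton_subset_iff.2 hcS) |>.2
        ⟨M, hMS, ?_⟩
      simp only [Finset.mem_singleton]
      exact fun h => absurd h.symm (ne_of_lt hcM)
    · constructor
      · intro h
        have := Finset.singleton_subset_iff.1 h
        simp only [Finset.mem_singleton] at this
        exact hc0 this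
      · intro h
        have := Finset.singleton_subset_iff.1 h
        simp only [Finset.mem_singleton] at this
        exact hc0 this.symm
    · constructor
      · intro h
        exact h0 (Finset.singleton_subset_iff.1 h)
      · intro h
        have := h hcS
        simp only [Finset.mem_singleton] at this
        exact hc0 this.symm
    · constructor
      · intro h
        exact h0 (h (Finset.mem_Iic.2 (le_of_lt hzc)))
      · intro h
        exact absurd (Finset.mem_Iic.1 (h hMS)) (not_le.2 hcM)

lemma no_copy {n : ℕ} : ¬ NCopy (Fam n) := by
  rintro ⟨A, hA, B, hB, C, hC, D, hD, hAB, hCB, hCD, hAC, hAD, hBD⟩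
  obtain ⟨b, hb⟩ : ∃ b, B = Finset.Iic b := by
    rcases (mem_Fam B).1 hB with ⟨i, rfl⟩ | h | rfl
    · have : A = ∅ := Finset.eq_empty_of_ssubset_singleton hAB
      exact absurd (this ▸ Finset.empty_subset C) hAC.1
    · exact h
    · exact absurd hAB (Finset.not_ssubset_empty A)
  obtain ⟨d, hd⟩ : ∃ d, D = Finset.Iic d := by
    rcases (mem_Fam D).1 hD with ⟨i, rfl⟩ | h | rfl
    · have : C = ∅ := Finset.eq_empty_of_ssubset_singleton hCD
      exact absurd (this ▸ Finset.empty_subset A) hAC.2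
    · exact h
    · exact absurd hCD (Finset.not_ssubset_empty C)
  subst hb hd
  rcases le_total b d with h | h
  · exact hBD.1 (Finset.Iic_subset_Iic.2 h)
  · exact hBD.2 (Finset.Iic_subset_Iic.2 h)

lemma card_Fam_le {n : ℕ} (hn : 3 ≤ n) : (Fam n).card ≤ 2 * n := by
  set S1 := Finset.univ.image fun i : Fin n => ({i} : Finset (Fin n)) with hS1
  set S2 := Finset.univ.image fun i : Fin n => (Finset.Iic i : Finset (Fin n)) with hS2
  have h1 : S1.card ≤ n := le_trans (Finset.card_image_le) (by simp)
  have h2 : S2.card ≤ n := le_trans (Finset.card_image_le) (by simp)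
  have hz : (0 : ℕ) < n := by omega
  set z : Fin n := ⟨0, hz⟩ with hzdef
  have hIicz : Finset.Iic z = ({z} : Finset (Fin n)) := by
    ext x
    simp only [Finset.mem_Iic, Finset.mem_singleton]
    constructor
    · intro h; apply Fin.ext; have := (Fin.le_def.1 h); simpa [hzdef] using this
    · rintro rfl; exact le_rfl
  have hmem : ({z} : Finset (Fin n)) ∈ S1 ∩ S2 := by
    rw [Finset.mem_inter]
    constructor
    · exact Finset.mem_image.2 ⟨z, Finset.mem_univ _, rfl⟩
    · exact Finset.mem_image.2 ⟨z, Finset.mem_univ _, hIicz⟩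
  have hinter : 1 ≤ (S1 ∩ S2).card := Finset.card_pos.2 ⟨_, hmem⟩
  have hu : (S1 ∪ S2).card + (S1 ∩ S2).card = S1.card + S2.card :=
    Finset.card_union_add_card_inter S1 S2
  have hcu : (S1 ∪ S2).card ≤ 2 * n - 1 := by omega
  calc (S1 ∪ S2 ∪ {∅}).card ≤ (S1 ∪ S2).card + ({∅} : Finset (Finset (Fin n))).card :=
        Finset.card_union_le _ _
    _ ≤ (2 * n - 1) + 1 := by simpa using hcu
    _ ≤ 2 * n := by omega

/-- For `n ≥ 3`, the family of all singletons together with all initial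
segments `{1, …, i}` and `∅` is induced-`N`-saturated; hence `isat(n, N) ≤ 2n`. -/
theorem stmt10 {n : ℕ} (hn : 3 ≤ n) :
    NSaturated ((Finset.univ.image fun i : Fin n => ({i} : Finset (Fin n))) ∪
        (Finset.univ.image fun i : Fin n => Finset.Iic i) ∪ {∅}) ∧
    sInf {m | ∃ F : Finset (Finset (Fin n)), NSaturated F ∧ F.card = m} ≤ 2 * n := by
  have hsat : NSaturated (Fam n) := ⟨no_copy, fun S hS => saturate hn S hS⟩
  refine ⟨hsat, ?_⟩
  exact le_trans (Nat.sInf_le ⟨Fam n, hsat, rfl⟩) (card_Fam_le hn)
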